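/- Let p be a probability measure on Z absolutely continuous with respect to p̂ with KL(p‖p̂) < ∞, let β > 0 and b ∈ ℝ^d, and let λ* be a maximizer of D_{β,b} over ℝ^d. Then for every λ ∈ ℝ^d: KL(p‖q_{λ*}) ≤ KL(p‖q_λ) + (2/β²)·‖∫ φ dp − b‖₂² + (β²/4)·‖λ‖₂². -/

import Mathlib

open MeasureTheory

/-- Euclidean inner product on `ℝ^d`. -/
noncomputable def dotd {d : ℕ} (lam v : Fin d → ℝ) : ℝ := ∑ i, lam i * v i

/-- The log-normalizer `Λ_λ = log ∫ exp⟨λ, φ(z)⟩ dp̂(z)`. -/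
noncomputable def LamZ {Z : Type*} [MeasurableSpace Z] (phat : Measure Z)
    {d : ℕ} (φ : Z → Fin d → ℝ) (lam : Fin d → ℝ) : ℝ :=
  Real.log (∫ z, Real.exp (dotd lam (φ z)) ∂phat)

/-- The Gibbs tilt `q_λ` of `p̂`: the measure with density
`z ↦ exp(⟨λ, φ(z)⟩ − Λ_λ)` with respect to `p̂`. -/
noncomputable def gibbs {Z : Type*} [MeasurableSpace Z] (phat : Measure Z)
    {d : ℕ} (φ : Z → Fin d → ℝ) (lam : Fin d → ℝ) : Measure Z :=
  phat.withDensity (fun z => ENNReal.ofReal (Real.exp (dotd lam (φ z) - LamZ phat φ lam)))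

/-- Kullback–Leibler divergence `KL(p‖q) = ∫ log (dp/dq) dp`. -/
noncomputable def KLm {Z : Type*} [MeasurableSpace Z] (p q : Measure Z) : ℝ :=
  ∫ z, Real.log ((p.rnDeriv q z).toReal) ∂p

/-- The `ℓ₂²`-regularized dual objective `D_{β,b}(λ) = ⟨λ,b⟩ − Λ_λ − (β²/4)‖λ‖₂²`. -/
noncomputable def Dreg {Z : Type*} [MeasurableSpace Z] (phat : Measure Z)
    {d : ℕ} (φ : Z → Fin d → ℝ) (β : ℝ) (b lam : Fin d → ℝ) : ℝ :=
  dotd lam b - LamZ phat φ lam - (β ^ 2 / 4) * ∑ i, (lam i) ^ 2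

/-- Scalar inequality used coordinatewise. -/
lemma scalar_key {β w u l : ℝ} (hβ : 0 < β) :
    w * (-u) - β ^ 2 / 4 * ((l + w) ^ 2 - l ^ 2) - β ^ 2 / 8 * w ^ 2 ≤
      w * 0 + 2 / β ^ 2 * u ^ 2 + β ^ 2 / 4 * l ^ 2 := by
  rw [← sub_nonneg]
  have hβ2 : β ^ 2 ≠ 0 := by positivity
  have h : (w * 0 + 2 / β ^ 2 * u ^ 2 + β ^ 2 / 4 * l ^ 2) -
      (w * (-u) - β ^ 2 / 4 * ((l + w) ^ 2 - l ^ 2) - β ^ 2 / 8 * w ^ 2)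
      = ((4 * u + 2 * β ^ 2 * l + 3 * β ^ 2 * w) ^ 2 + 2 * (4 * u - β ^ 2 * l) ^ 2)
        / (24 * β ^ 2) := by
    field_simp
    ring
  rw [h]
  positivity

theorem stmt9 {Z : Type*} [MeasurableSpace Z] (phat : Measure Z) [IsProbabilityMeasure phat]
    {d : ℕ} (φ : Z → Fin d → ℝ) (hφm : Measurable φ)
    (C : ℝ) (hφb : ∀ z i, |φ z i| ≤ C)
    (p : Measure Z) [IsProbabilityMeasure p] (hac : p ≪ phat)
    (hKLfin : Integrable (fun z => Real.log ((p.rnDeriv phat z).toReal)) p)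
    (β : ℝ) (hβ : 0 < β) (b : Fin d → ℝ) (lamStar : Fin d → ℝ)
    (hmax : ∀ lam, Dreg phat φ β b lam ≤ Dreg phat φ β b lamStar) :
    ∀ lam : Fin d → ℝ,
      KLm p (gibbs phat φ lamStar) ≤
        KLm p (gibbs phat φ lam) +
          (2 / β ^ 2) * (∑ i, ((∫ z, φ z i ∂p) - b i) ^ 2) +
          (β ^ 2 / 4) * ∑ i, (lam i) ^ 2 := by
  intro lam
  haveI : NeZero phat := ⟨IsProbabilityMeasure.ne_zero phat⟩
  -- measurability and boundedness of the linear statistics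
  have hφi : ∀ i, Measurable (fun z => φ z i) := fun i => (measurable_pi_apply i).comp hφm
  have hfm : ∀ ν : Fin d → ℝ, Measurable (fun z => dotd ν (φ z)) := by
    intro ν
    simp only [dotd]
    exact Finset.measurable_sum _ fun i _ => (hφi i).const_mul _
  have hfb : ∀ (ν : Fin d → ℝ) z, |dotd ν (φ z)| ≤ ∑ i, |ν i| * |C| := by
    intro ν z
    refine (Finset.abs_sum_le_sum_abs _ _).trans (Finset.sum_le_sum fun i _ => ?_)
    rw [abs_mul]
    exact mul_le_mul_of_nonneg_left ((hφb z i).trans (le_abs_self C)) (abs_nonneg _)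
  -- integrability of the exponentials under phat
  have hExp : ∀ ν : Fin d → ℝ, Integrable (fun z => Real.exp (dotd ν (φ z))) phat := by
    intro ν
    refine Integrable.mono' (integrable_const (Real.exp (∑ i, |ν i| * |C|)))
      (Real.measurable_exp.comp (hfm ν)).aestronglyMeasurable (ae_of_all _ fun z => ?_)
    rw [Real.norm_eq_abs, abs_of_pos (Real.exp_pos _)]
    exact Real.exp_le_exp.2 ((le_abs_self _).trans (hfb ν z))
  have hIpos : ∀ ν : Fin d → ℝ, 0 < ∫ z, Real.exp (dotd ν (φ z)) ∂phat :=
    fun ν => integral_exp_pos (hExp ν)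
  -- gibbs is the exponential tilt
  have hgibbs : ∀ ν : Fin d → ℝ, gibbs phat φ ν = phat.tilted (fun z => dotd ν (φ z)) := by
    intro ν
    unfold gibbs Measure.tilted LamZ
    congr 1
    funext z
    rw [Real.exp_sub, Real.exp_log (hIpos ν)]
  -- integrability of statistics under p
  have hφip : ∀ i, Integrable (fun z => φ z i) p := by
    intro i
    refine Integrable.mono' (integrable_const |C|) (hφi i).aestronglyMeasurable
      (ae_of_all _ fun z => ?_)
    rw [Real.norm_eq_abs]
    exact (hφb z i).trans (le_abs_self C)
  have hfip : ∀ ν : Fin d → ℝ, Integrable (fun z => dotd ν (φ z)) p := by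
    intro ν
    refine Integrable.mono' (integrable_const (∑ i, |ν i| * |C|)) (hfm ν).aestronglyMeasurable
      (ae_of_all _ fun z => hfb ν z)
  -- ∫ dotd ν φ dp = dotd ν μvec
  set μv : Fin d → ℝ := fun i => ∫ z, φ z i ∂p with hμv
  have hintf : ∀ ν : Fin d → ℝ, ∫ z, dotd ν (φ z) ∂p = dotd ν μv := by
    intro ν
    simp only [dotd]
    rw [integral_finset_sum _ fun i _ => (hφip i).const_mul _]
    exact Finset.sum_congr rfl fun i _ => integral_const_mul _ _
  -- the KL identity
  have hKL : ∀ ν : Fin d → ℝ,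
      KLm p (gibbs phat φ ν) = KLm p phat + LamZ phat φ ν - dotd ν μv := by
    intro ν
    rw [hgibbs ν]
    have h1 : (fun z => Real.log ((p.rnDeriv (phat.tilted (fun z => dotd ν (φ z))) z).toReal))
        =ᵐ[p] fun z => Real.log ((p.rnDeriv phat z).toReal) + (LamZ phat φ ν - dotd ν (φ z)) := by
      filter_upwards [(toReal_rnDeriv_tilted_right p phat (hExp ν)).filter_mono hac.ae_le,
        Measure.rnDeriv_pos hac,
        (Measure.rnDeriv_lt_top p phat).filter_mono hac.ae_le] with z hz hzpos hzlt
      rw [hz]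
      have h0 : 0 < ((p.rnDeriv phat z).toReal) := ENNReal.toReal_pos hzpos.ne' hzlt.ne
      rw [Real.log_mul (mul_pos (Real.exp_pos _) (hIpos ν)).ne' h0.ne',
        Real.log_mul (Real.exp_ne_zero _) (hIpos ν).ne', Real.log_exp]
      unfold LamZ
      ring
    have h2 : Integrable (fun z => LamZ phat φ ν - dotd ν (φ z)) p :=
      (integrable_const _).sub (hfip ν)
    rw [KLm, integral_congr_ae h1, integral_add hKLfin h2,
      integral_sub (integrable_const _) (hfip ν), integral_const, hintf ν]
    simp only [KLm, measure_univ, probReal_univ, ENNReal.toReal_one, smul_eq_mul, one_mul]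
    ring
  -- midpoint convexity of LamZ via Cauchy-Schwarz
  set mid : Fin d → ℝ := fun i => (lam i + lamStar i) / 2 with hmiddef
  have hmid : LamZ phat φ mid ≤ (LamZ phat φ lam + LamZ phat φ lamStar) / 2 := by
    have hml : ∀ (ν : Fin d → ℝ), MemLp (fun z => Real.exp (dotd ν (φ z) / 2))
        (ENNReal.ofReal 2) phat := by
      intro ν
      refine MemLp.of_bound ((Real.measurable_exp.comp ((hfm ν).div_const 2)).aestronglyMeasurable)
        (Real.exp ((∑ i, |ν i| * |C|) / 2)) (ae_of_all _ fun z => ?_)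
      rw [Real.norm_eq_abs, abs_of_pos (Real.exp_pos _)]
      exact Real.exp_le_exp.2 (by linarith [(le_abs_self _).trans (hfb ν z)])
    have hconj : Real.HolderConjugate 2 2 := Real.holderConjugate_iff.mpr ⟨one_lt_two, by norm_num⟩
    have hCS := integral_mul_le_Lp_mul_Lq_of_nonneg (μ := phat) hconj
      (f := fun z => Real.exp (dotd lam (φ z) / 2))
      (g := fun z => Real.exp (dotd lamStar (φ z) / 2))
      (ae_of_all _ fun z => (Real.exp_pos _).le) (ae_of_all _ fun z => (Real.exp_pos _).le)
      (hml lam) (hml lamStar)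
    have hsq : ∀ (ν : Fin d → ℝ) z, Real.exp (dotd ν (φ z) / 2) ^ (2 : ℝ)
        = Real.exp (dotd ν (φ z)) := by
      intro ν z
      rw [← Real.exp_mul]
      norm_num
    have hprod : ∀ z, Real.exp (dotd lam (φ z) / 2) * Real.exp (dotd lamStar (φ z) / 2)
        = Real.exp (dotd mid (φ z)) := by
      intro z
      rw [← Real.exp_add]
      congr 1
      simp only [dotd, hmiddef]
      rw [Finset.sum_div, Finset.sum_div, ← Finset.sum_add_distrib]
      exact Finset.sum_congr rfl fun i _ => by ring
    simp only [hsq, hprod] at hCS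
    have hlog := Real.log_le_log (hIpos mid) hCS
    rw [Real.log_mul (Real.rpow_pos_of_pos (hIpos lam) _).ne'
        (Real.rpow_pos_of_pos (hIpos lamStar) _).ne',
      Real.log_rpow (hIpos lam), Real.log_rpow (hIpos lamStar)] at hlog
    unfold LamZ
    linarith
  -- strong concavity consequence at the maximizer
  have e_b : dotd mid b = (dotd lam b + dotd lamStar b) / 2 := by
    simp only [dotd, hmiddef]
    rw [← Finset.sum_add_distrib, Finset.sum_div]
    exact Finset.sum_congr rfl fun i _ => by ring
  have e_s : ∑ i, (mid i) ^ 2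
      = (∑ i, (lam i) ^ 2 + ∑ i, (lamStar i) ^ 2) / 2 - (∑ i, (lamStar i - lam i) ^ 2) / 4 := by
    simp only [hmiddef]
    rw [← Finset.sum_add_distrib, Finset.sum_div, Finset.sum_div, ← Finset.sum_sub_distrib]
    exact Finset.sum_congr rfl fun i _ => by ring
  have hsc : dotd lam b - LamZ phat φ lam - β ^ 2 / 4 * ∑ i, (lam i) ^ 2
      + β ^ 2 / 8 * ∑ i, (lamStar i - lam i) ^ 2
      ≤ dotd lamStar b - LamZ phat φ lamStar - β ^ 2 / 4 * ∑ i, (lamStar i) ^ 2 := by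
    have h := hmax mid
    simp only [Dreg] at h
    rw [e_b, e_s] at h
    have h' := hmax lam
    simp only [Dreg] at h'
    nlinarith [hmid]
  -- coordinatewise quadratic inequality summed up
  have key : ∀ i ∈ Finset.univ, (lamStar i - lam i) * (b i - μv i)
      - β ^ 2 / 4 * ((lamStar i) ^ 2 - (lam i) ^ 2)
      - β ^ 2 / 8 * (lamStar i - lam i) ^ 2
      ≤ 2 / β ^ 2 * (μv i - b i) ^ 2 + β ^ 2 / 4 * (lam i) ^ 2 := by
    intro i _
    have := scalar_key (β := β) (w := lamStar i - lam i) (u := μv i - b i) (l := lam i) hβ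
    nlinarith [this]
  have hsum := Finset.sum_le_sum key
  have hL : ∑ i, ((lamStar i - lam i) * (b i - μv i)
      - β ^ 2 / 4 * ((lamStar i) ^ 2 - (lam i) ^ 2)
      - β ^ 2 / 8 * (lamStar i - lam i) ^ 2)
      = (dotd lamStar b - dotd lam b) - (dotd lamStar μv - dotd lam μv)
        - β ^ 2 / 4 * (∑ i, (lamStar i) ^ 2) + β ^ 2 / 4 * (∑ i, (lam i) ^ 2)
        - β ^ 2 / 8 * ∑ i, (lamStar i - lam i) ^ 2 := by
    simp only [dotd, Finset.mul_sum, ← Finset.sum_sub_distrib, ← Finset.sum_add_distrib]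
    exact Finset.sum_congr rfl fun i _ => by ring
  have hR : ∑ i, (2 / β ^ 2 * (μv i - b i) ^ 2 + β ^ 2 / 4 * (lam i) ^ 2)
      = 2 / β ^ 2 * (∑ i, (μv i - b i) ^ 2) + β ^ 2 / 4 * ∑ i, (lam i) ^ 2 := by
    simp only [Finset.mul_sum, ← Finset.sum_add_distrib]
  rw [hL, hR] at hsum
  -- conclude
  rw [hKL lam, hKL lamStar]
  have hμeq : ∀ i, μv i = ∫ z, φ z i ∂p := fun i => rfl
  simp only [← hμeq]
  linarith [hsum, hsc]
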